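/- Let P be a finite poset with comparability graph G = G(P). Then every weak order W extending P satisfies H(W) ≥ H_χ(G), where H_χ(G) denotes the chromatic entropy of G. -/

import Mathlib

/-- A stable (independent) set of a simple graph, as a `Finset` of vertices. -/
def IsStableSet {V : Type*} (G : SimpleGraph V) (S : Finset V) : Prop :=
  ∀ v ∈ S, ∀ w ∈ S, ¬ G.Adj v w

/-- The stable set polytope `STAB(G)`: the convex hull of characteristic vectors
of stable sets of `G`. -/
noncomputable def STAB {V : Type*} [Fintype V] [DecidableEq V] (G : SimpleGraph V) :
    Set (V → ℝ) :=
  convexHull ℝ {x | ∃ S : Finset V, IsStableSet G S ∧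
    x = fun v => if v ∈ S then (1 : ℝ) else 0}

/-- The (Körner) entropy of a graph `G` on `n` vertices:
`H(G) = min_{x ∈ STAB(G), x > 0} -(1/n) ∑_v log₂ x_v`. -/
noncomputable def graphEntropy {V : Type*} [Fintype V] [DecidableEq V]
    (G : SimpleGraph V) : ℝ :=
  sInf {h : ℝ | ∃ x ∈ STAB G, (∀ v, 0 < x v) ∧
    h = -(1 / (Fintype.card V : ℝ)) * ∑ v, Real.logb 2 (x v)}

/-- The comparability graph of a partial order `P`: distinct `v, w` are adjacent
iff they are comparable in `P`. -/
def compGraph {V : Type*} (P : PartialOrder V) : SimpleGraph V where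
  Adj v w := v ≠ w ∧ (P.le v w ∨ P.le w v)
  symm := ⟨fun v w h => ⟨h.1.symm, h.2.symm⟩⟩
  loopless := ⟨fun v h => h.1 rfl⟩

/-- The entropy of a poset: the entropy of its comparability graph. -/
noncomputable def posetEntropy {V : Type*} [Fintype V] [DecidableEq V]
    (P : PartialOrder V) : ℝ :=
  graphEntropy (compGraph P)

/-- The number `e(P)` of linear extensions of a finite poset `P`, counted as
order-preserving bijections onto `Fin n`. -/
noncomputable def numLinExt {V : Type*} [Fintype V] (P : PartialOrder V) : ℕ :=
  Nat.card {f : V ≃ Fin (Fintype.card V) // ∀ v w : V, P.le v w → f v ≤ f w}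

/-- `W` is a weak order: its ground set is partitioned into layers
`A 0, …, A (k-1)` (necessarily antichains), and `v <_W w` holds exactly when
`v` lies in an earlier layer than `w`. -/
def IsWeakOrder {V : Type*} (W : PartialOrder V) : Prop :=
  ∃ (k : ℕ) (A : Fin k → Finset V),
    (∀ v : V, ∃! i, v ∈ A i) ∧
    (∀ v w : V, W.lt v w ↔ ∃ i j : Fin k, i < j ∧ v ∈ A i ∧ w ∈ A j)

/-- `Q` extends `P`: same ground set, and every relation of `P` holds in `Q`. -/
def Extends {V : Type*} (Q P : PartialOrder V) : Prop :=
  ∀ v w : V, P.le v w → Q.le v w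

/-- The entropy `-∑ i (|C i|/n) log₂ (|C i|/n)` of a coloring with color
classes `C 0, …, C (k-1)`. -/
noncomputable def coloringEntropy {V : Type*} [Fintype V] {k : ℕ}
    (C : Fin k → Finset V) : ℝ :=
  -∑ i, ((C i).card / (Fintype.card V : ℝ)) *
    Real.logb 2 ((C i).card / (Fintype.card V : ℝ))

/-- The chromatic entropy of `G`: the minimum entropy of a proper coloring
(a partition of the vertices into stable sets). -/
noncomputable def chromaticEntropy {V : Type*} [Fintype V] [DecidableEq V]
    (G : SimpleGraph V) : ℝ :=
  sInf {h : ℝ | ∃ (k : ℕ) (C : Fin k → Finset V),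
    (∀ i, IsStableSet G (C i)) ∧ (∀ v : V, ∃! i, v ∈ C i) ∧
    h = coloringEntropy C}


section Auxiliary

open Finset

private lemma aux_sum_log_le_zero {V : Type*} [Fintype V] (hn : 1 ≤ Fintype.card V)
    (t : V → ℝ) (ht : ∀ v, 0 < t v) (hs : ∑ v, t v ≤ (Fintype.card V : ℝ)) :
    ∑ v, Real.log (t v) ≤ 0 := by
  set n : ℝ := (Fintype.card V : ℝ) with hn_def
  have hn0 : (0:ℝ) < n := by
    have : 0 < Fintype.card V := hn
    rw [hn_def]; exact_mod_cast this
  have jensen := strictConcaveOn_log_Ioi.concaveOn.le_map_sum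
    (t := Finset.univ) (w := fun _ : V => 1/n) (p := t)
    (fun i _ => by positivity)
    (by simp [Finset.sum_const, Finset.card_univ]; field_simp; exact hn_def.symm)
    (fun i _ => ht i)
  simp only [smul_eq_mul] at jensen
  have h1 : ∑ v, (1/n) * t v ≤ 1 := by
    rw [← Finset.mul_sum, div_mul_eq_mul_div, one_mul, div_le_one hn0]
    exact hs
  have h1' : (0:ℝ) ≤ ∑ v, (1/n) * t v :=
    Finset.sum_nonneg fun v _ => by have := ht v; positivity
  have h3 : ∑ v, (1/n) * Real.log (t v) ≤ 0 :=
    le_trans jensen (Real.log_nonpos h1' h1)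
  rw [← Finset.mul_sum] at h3
  have hinv : (0:ℝ) < 1/n := by positivity
  exact le_of_mul_le_mul_left (by simpa using h3) hinv

end Auxiliary

/-- Every weak order extension `W` of a poset `P` has entropy at least the
chromatic entropy of the comparability graph of `P`. -/
theorem chromaticEntropy_le_weakOrder_entropy {V : Type*} [Fintype V]
    [DecidableEq V] (P : PartialOrder V) (hn : 1 ≤ Fintype.card V)
    (W : PartialOrder V) (hW : IsWeakOrder W) (hext : Extends W P) :
    chromaticEntropy (compGraph P) ≤ posetEntropy W := by
  classical
  obtain ⟨k, A, hA1, hA2⟩ := hW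
  set n : ℝ := (Fintype.card V : ℝ) with hn_def
  have hn0 : (0:ℝ) < n := by
    have : 0 < Fintype.card V := hn
    rw [hn_def]; exact_mod_cast this
  -- layer index function
  let ι : V → Fin k := fun v => (hA1 v).choose
  have hmem : ∀ v, v ∈ A (ι v) := fun v => (hA1 v).choose_spec.1
  have huni : ∀ v i, v ∈ A i → i = ι v := fun v i h => (hA1 v).choose_spec.2 i h
  have hAmem : ∀ v i, v ∈ A i ↔ i = ι v :=
    fun v i => ⟨huni v i, fun h => h ▸ hmem v⟩
  have hc0 : ∀ v, (0:ℝ) < ((A (ι v)).card : ℝ) := by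
    intro v
    have : 0 < (A (ι v)).card := Finset.card_pos.mpr ⟨v, hmem v⟩
    exact_mod_cast this
  have hlt : ∀ v w : V, W.le v w → v ≠ w → W.lt v w := by
    intro v w hle hne
    refine (W.lt_iff_le_not_ge v w).mpr ⟨hle, fun h => hne ?_⟩
    exact W.le_antisymm v w hle h
  have hltle : ∀ v w : V, W.lt v w → W.le v w :=
    fun v w h => ((W.lt_iff_le_not_ge v w).mp h).1
  have hsame : ∀ (i : Fin k) (v w : V), v ∈ A i → w ∈ A i → W.le v w → v = w := by
    intro i v w hv hw hle
    by_contra hne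
    obtain ⟨i', j', hij, hv', hw'⟩ := (hA2 v w).mp (hlt v w hle hne)
    have h1 : i' = i := (huni v i' hv').trans (huni v i hv).symm
    have h2 : j' = i := (huni w j' hw').trans (huni w i hw).symm
    rw [h1, h2] at hij
    exact lt_irrefl i hij
  have hstabW : ∀ i, IsStableSet (compGraph W) (A i) := by
    intro i v hv w hw hadj
    obtain ⟨hne, hor⟩ := hadj
    rcases hor with h | h
    · exact hne (hsame i v w hv hw h)
    · exact hne ((hsame i w v hw hv h).symm)
  have hstabP : ∀ i, IsStableSet (compGraph P) (A i) := by
    intro i v hv w hw hadj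
    obtain ⟨hne, hor⟩ := hadj
    rcases hor with h | h
    · exact hne (hsame i v w hv hw (hext v w h))
    · exact hne ((hsame i w v hw hv (hext w v h)).symm)
  have hfilter : ∀ i, Finset.univ.filter (fun v => ι v = i) = A i := by
    intro i; ext v
    simp [hAmem v i, eq_comm]
  have hgroup : ∀ g : Fin k → ℝ, ∑ v, g (ι v) = ∑ i, ((A i).card : ℝ) * g i := by
    intro g
    rw [← Finset.sum_fiberwise_of_maps_to' (t := Finset.univ)
      (fun v _ => Finset.mem_univ (ι v)) g]
    refine Finset.sum_congr rfl fun i _ => ?_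
    rw [hfilter i, Finset.sum_const, nsmul_eq_mul]
  have hcard : ∑ i, ((A i).card : ℝ) = n := by
    have h := hgroup (fun _ => (1:ℝ))
    simpa [Finset.card_univ, hn_def] using h.symm
  -- the halfspace bound on STAB (compGraph W)
  have hhalf : ∀ x ∈ STAB (compGraph W), ∑ v, x v / ((A (ι v)).card : ℝ) ≤ 1 := by
    intro x hx
    have hconv : Convex ℝ {y : V → ℝ | ∑ v, y v / ((A (ι v)).card : ℝ) ≤ 1} := by
      refine convex_halfSpace_le ⟨?_, ?_⟩ 1
      · intro y z; simp [add_div, Finset.sum_add_distrib]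
      · intro c y
        simp only [Pi.smul_apply, smul_eq_mul, mul_div_assoc, ← Finset.mul_sum]
    refine convexHull_min ?_ hconv hx
    rintro y ⟨S, hS, rfl⟩
    simp only [Set.mem_setOf_eq]
    have hsum : ∑ v, (if v ∈ S then (1:ℝ) else 0) / ((A (ι v)).card : ℝ)
        = ∑ v ∈ S, 1 / ((A (ι v)).card : ℝ) := by
      calc ∑ v, (if v ∈ S then (1:ℝ) else 0) / ((A (ι v)).card : ℝ)
          = ∑ v, (if v ∈ S then 1 / ((A (ι v)).card : ℝ) else 0) :=
            Finset.sum_congr rfl fun v _ => by by_cases h : v ∈ S <;> simp [h]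
        _ = ∑ v ∈ S, 1 / ((A (ι v)).card : ℝ) := by
            rw [Finset.sum_ite_mem, Finset.univ_inter]
    rw [hsum]
    rcases S.eq_empty_or_nonempty with rfl | ⟨v0, hv0⟩
    · simp
    · have hall : ∀ v ∈ S, ι v = ι v0 := by
        intro v hv
        by_contra hne
        have hvne : v ≠ v0 := fun h => hne (by rw [h])
        rcases lt_trichotomy (ι v) (ι v0) with h | h | h
        · have hlt' : W.lt v v0 := (hA2 v v0).mpr ⟨ι v, ι v0, h, hmem v, hmem v0⟩
          exact hS v hv v0 hv0 ⟨hvne, Or.inl (hltle v v0 hlt')⟩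
        · exact hne h
        · have hlt' : W.lt v0 v := (hA2 v0 v).mpr ⟨ι v0, ι v, h, hmem v0, hmem v⟩
          exact hS v hv v0 hv0 ⟨hvne, Or.inr (hltle v0 v hlt')⟩
      have hsub : S ⊆ A (ι v0) := fun v hv => (hAmem v (ι v0)).mpr (hall v hv).symm
      calc ∑ v ∈ S, 1 / ((A (ι v)).card : ℝ)
          = ∑ _v ∈ S, 1 / ((A (ι v0)).card : ℝ) :=
            Finset.sum_congr rfl fun v hv => by rw [hall v hv]
        _ = (S.card : ℝ) / ((A (ι v0)).card : ℝ) := by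
            rw [Finset.sum_const, nsmul_eq_mul, mul_one_div]
        _ ≤ 1 := by
            rw [div_le_one (hc0 v0)]
            exact_mod_cast Finset.card_le_card hsub
  -- chromatic entropy is at most the entropy of the coloring A
  have hbdd : BddBelow {h : ℝ | ∃ (k' : ℕ) (C : Fin k' → Finset V),
      (∀ i, IsStableSet (compGraph P) (C i)) ∧ (∀ v : V, ∃! i, v ∈ C i) ∧
      h = coloringEntropy C} := by
    refine ⟨0, ?_⟩
    rintro h ⟨k', C, _, _, rfl⟩
    unfold coloringEntropy
    rw [le_neg, neg_zero]
    refine Finset.sum_nonpos fun i _ => ?_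
    have h1 : (0:ℝ) ≤ ((C i).card : ℝ) / (Fintype.card V : ℝ) :=
      div_nonneg (Nat.cast_nonneg _) (Nat.cast_nonneg _)
    have h2 : ((C i).card : ℝ) / (Fintype.card V : ℝ) ≤ 1 := by
      rw [div_le_one (by rw [← hn_def]; exact hn0)]
      exact_mod_cast Finset.card_le_univ (C i)
    exact mul_nonpos_of_nonneg_of_nonpos h1 (Real.logb_nonpos one_lt_two h1 h2)
  have hchrom : chromaticEntropy (compGraph P) ≤ coloringEntropy A :=
    csInf_le hbdd ⟨k, A, hstabP, hA1, rfl⟩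
  refine le_trans hchrom ?_
  -- now bound the entropy of every admissible point of STAB (compGraph W)
  unfold posetEntropy graphEntropy
  have hlog2 : (0:ℝ) < Real.log 2 := Real.log_pos one_lt_two
  -- the coloring point, to witness nonemptiness
  have hne_set : {h : ℝ | ∃ x ∈ STAB (compGraph W), (∀ v, 0 < x v) ∧
      h = -(1 / (Fintype.card V : ℝ)) * ∑ v, Real.logb 2 (x v)}.Nonempty := by
    refine ⟨_, fun v => ((A (ι v)).card : ℝ) / n, ?_, fun v => by
      exact div_pos (hc0 v) hn0, rfl⟩
    have hx0 : (fun v => ((A (ι v)).card : ℝ) / n)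
        = ∑ i, (((A i).card : ℝ) / n) • (fun v => if v ∈ A i then (1:ℝ) else 0) := by
      funext v
      simp only [Finset.sum_apply, Pi.smul_apply, smul_eq_mul, mul_ite, mul_one, mul_zero]
      have : ∀ i, (if v ∈ A i then ((A i).card : ℝ) / n else 0)
          = if i = ι v then ((A (ι v)).card : ℝ) / n else 0 := by
        intro i
        by_cases h : v ∈ A i
        · have hi := huni v i h
          rw [if_pos h, if_pos hi, hi]
        · rw [if_neg h, if_neg (fun hh => h ((hAmem v i).mpr hh))]
      rw [Finset.sum_congr rfl fun i _ => this i, Finset.sum_ite_eq' Finset.univ (ι v)]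
      simp
    rw [hx0]
    refine Convex.sum_mem (convex_convexHull ℝ _) (fun i _ => div_nonneg (Nat.cast_nonneg _) hn0.le) ?_
      (fun i _ => subset_convexHull ℝ _ ⟨A i, hstabW i, rfl⟩)
    rw [← Finset.sum_div, hcard, div_self (ne_of_gt hn0)]
  refine le_csInf hne_set ?_
  rintro h ⟨x, hx, hpos, rfl⟩
  -- the key log inequality
  have key : ∑ v, Real.log (x v) ≤ ∑ i, ((A i).card : ℝ) * Real.log (((A i).card : ℝ) / n) := by
    set t : V → ℝ := fun v => x v * n / ((A (ι v)).card : ℝ) with ht_def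
    have ht : ∀ v, 0 < t v := fun v => by
      have h1 := hpos v; have h2 := hc0 v
      rw [ht_def]; exact div_pos (mul_pos h1 hn0) h2
    have hs : ∑ v, t v ≤ (Fintype.card V : ℝ) := by
      rw [← hn_def]
      have e : ∀ v, t v = n * (x v / ((A (ι v)).card : ℝ)) := fun v => by
        rw [ht_def]; ring
      rw [Finset.sum_congr rfl fun v _ => e v, ← Finset.mul_sum]
      calc n * ∑ v, x v / ((A (ι v)).card : ℝ) ≤ n * 1 := by
            exact mul_le_mul_of_nonneg_left (hhalf x hx) (le_of_lt hn0)
        _ = n := mul_one n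
    have hmain := aux_sum_log_le_zero hn t ht hs
    have hlogt : ∀ v, Real.log (t v)
        = Real.log (x v) - Real.log (((A (ι v)).card : ℝ) / n) := by
      intro v
      have e : t v = x v / (((A (ι v)).card : ℝ) / n) := by
        rw [ht_def]; exact (div_div_eq_mul_div (x v) _ n).symm
      rw [e, Real.log_div (ne_of_gt (hpos v)) (ne_of_gt (div_pos (hc0 v) hn0))]
    rw [Finset.sum_congr rfl fun v _ => hlogt v, Finset.sum_sub_distrib,
      sub_nonpos] at hmain
    refine le_trans hmain ?_
    rw [hgroup (fun i => Real.log (((A i).card : ℝ) / n))]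
  -- final arithmetic: convert logb to log and divide
  have e1 : coloringEntropy A
      = (-(∑ i, ((A i).card : ℝ) * Real.log (((A i).card : ℝ) / n))) / (n * Real.log 2) := by
    unfold coloringEntropy
    rw [← hn_def]
    simp only [← Real.log_div_log]
    rw [Finset.sum_congr rfl (fun i _ => by
      show ((A i).card : ℝ) / n * (Real.log (((A i).card : ℝ) / n) / Real.log 2)
        = (((A i).card : ℝ) * Real.log (((A i).card : ℝ) / n)) / (n * Real.log 2)
      ring), ← Finset.sum_div, neg_div]
  have e2 : -(1 / (Fintype.card V : ℝ)) * ∑ v, Real.logb 2 (x v)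
      = (-(∑ v, Real.log (x v))) / (n * Real.log 2) := by
    rw [← hn_def]
    simp only [← Real.log_div_log]
    rw [← Finset.sum_div]
    field_simp
  rw [e1, e2]
  have hD : (0:ℝ) < n * Real.log 2 := mul_pos hn0 hlog2
  exact (div_le_div_iff_of_pos_right hD).mpr (neg_le_neg key)
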